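/- Let R be a semiprime ring. Then for polynomials f(x) = \sum_{i=0}^m a_i x^i and g(x) = \sum_{j=0}^n b_j x^j in R[x], we have f(x) R[x] g(x) = 0 if and only if a_i R b_j = 0 for all i, j. -/

import Mathlib

open Polynomial Finset

/-- In a semiprime ring, `a R b = 0` implies `b R a = 0`. -/
private lemma sp_symm {R : Type*} [Ring R]
    (hsp : ∀ a : R, (∀ r : R, a * r * a = 0) → a = 0)
    {a b : R} (h : ∀ r : R, a * r * b = 0) : ∀ r : R, b * r * a = 0 := by
  intro r
  apply hsp
  intro s
  have : b * r * a * s * (b * r * a) = b * r * (a * s * b) * (r * a) := by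
    simp only [mul_assoc]
  rw [this, h s, mul_zero, zero_mul]

/-- Key lemma: the leading coefficient of `f` annihilates every coefficient of `g`. -/
private lemma lead_ann {R : Type*} [Ring R]
    (hsp : ∀ a : R, (∀ r : R, a * r * a = 0) → a = 0)
    (f g : Polynomial R) (hf : ∀ h : Polynomial R, f * h * g = 0) :
    ∀ (j : ℕ) (r : R), f.leadingCoeff * r * g.coeff j = 0 := by
  suffices H : ∀ (d j : ℕ), g.natDegree ≤ j + d → ∀ r : R, f.leadingCoeff * r * g.coeff j = 0 by
    intro j r
    exact H g.natDegree j (Nat.le_add_left _ j) r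
  set m := f.natDegree with hm
  -- the basic coefficient identity
  have E : ∀ (j : ℕ) (r : R),
      f.leadingCoeff * r * g.coeff j
        = -∑ p ∈ (antidiagonal (m + j)).erase (m, j), f.coeff p.1 * r * g.coeff p.2 := by
    intro j r
    have h0 : (f * C r * g).coeff (m + j) = 0 := by rw [hf (C r)]; simp
    rw [coeff_mul] at h0
    simp only [coeff_mul_C] at h0
    have hmem : ((m, j) : ℕ × ℕ) ∈ antidiagonal (m + j) := by simp
    rw [← Finset.sum_erase_add _ _ hmem] at h0
    have : f.coeff m = f.leadingCoeff := rfl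
    rw [eq_neg_of_add_eq_zero_left h0] at *
    rw [← this]
    exact (neg_neg _).symm
  -- facts about off-diagonal terms
  have hoff : ∀ (j : ℕ) (p : ℕ × ℕ), p ∈ (antidiagonal (m + j)).erase (m, j) →
      f.coeff p.1 = 0 ∨ j < p.2 := by
    intro j p hp
    rcases Finset.mem_erase.mp hp with ⟨hne, hmem⟩
    rw [Finset.HasAntidiagonal.mem_antidiagonal] at hmem
    rcases lt_trichotomy p.1 m with h1 | h1 | h1
    · right; omega
    · exfalso; apply hne; ext <;> omega
    · left; exact coeff_eq_zero_of_natDegree_lt h1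
  intro d
  induction d with
  | zero =>
    intro j hj r
    rw [E j r]
    rw [Finset.sum_eq_zero, neg_zero]
    intro p hp
    rcases hoff j p hp with h | h
    · simp [h]
    · rw [coeff_eq_zero_of_natDegree_lt (show g.natDegree < p.2 by omega), mul_zero]
  | succ d ih =>
    intro j hj r
    apply hsp
    intro s
    nth_rewrite 1 [E j r]
    rw [neg_mul, neg_mul, Finset.sum_mul, Finset.sum_mul, neg_eq_zero]
    apply Finset.sum_eq_zero
    intro p hp
    rcases hoff j p hp with h | h
    · simp [h]
    · rcases le_or_gt p.2 g.natDegree with h2 | h2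
      · have hib : ∀ t : R, f.leadingCoeff * t * g.coeff p.2 = 0 :=
          ih p.2 (by omega)
        have hsym := sp_symm hsp hib
        have : f.coeff p.1 * r * g.coeff p.2 * s * (f.leadingCoeff * r * g.coeff j)
            = f.coeff p.1 * r * ((g.coeff p.2 * s * f.leadingCoeff) * (r * g.coeff j)) := by
          simp only [mul_assoc]
        rw [this, hsym s]; simp
      · rw [coeff_eq_zero_of_natDegree_lt h2, mul_zero, zero_mul, zero_mul]

private lemma fwd {R : Type*} [Ring R]
    (hsp : ∀ a : R, (∀ r : R, a * r * a = 0) → a = 0) :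
    ∀ (N : ℕ) (f g : Polynomial R), f.natDegree ≤ N → (∀ h : Polynomial R, f * h * g = 0) →
      ∀ (i j : ℕ) (r : R), f.coeff i * r * g.coeff j = 0 := by
  intro N
  induction N with
  | zero =>
    intro f g hdeg hf i j r
    rcases Nat.eq_zero_or_pos i with rfl | hi
    · have : f.coeff 0 = f.leadingCoeff := by
        rw [leadingCoeff, Nat.eq_zero_of_le_zero hdeg]
      rw [this]
      exact lead_ann hsp f g hf j r
    · rw [coeff_eq_zero_of_natDegree_lt (by omega), zero_mul, zero_mul]
  | succ N ih =>
    intro f g hdeg hf i j r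
    rcases eq_or_ne i f.natDegree with rfl | hi
    · exact lead_ann hsp f g hf j r
    · -- strip the lead
      have key : ∀ h : Polynomial R, C f.leadingCoeff * X ^ f.natDegree * h * g = 0 := by
        intro h
        ext k
        rw [coeff_zero, mul_assoc, mul_assoc, coeff_C_mul]
        rw [coeff_X_pow_mul']
        by_cases hk : f.natDegree ≤ k
        · rw [if_pos hk, coeff_mul, Finset.mul_sum]
          apply Finset.sum_eq_zero
          intro p hp
          rw [← mul_assoc]
          exact lead_ann hsp f g hf p.2 (h.coeff p.1)
        · rw [if_neg hk, mul_zero]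
      have hferase : ∀ h : Polynomial R, f.eraseLead * h * g = 0 := by
        intro h
        have hsplit : f.eraseLead = f - C f.leadingCoeff * X ^ f.natDegree :=
          eq_sub_of_add_eq f.eraseLead_add_C_mul_X_pow
        rw [hsplit, sub_mul, sub_mul, hf h, key h, sub_zero]
      have hcoeff : f.eraseLead.coeff i = f.coeff i := by
        rw [eraseLead_coeff, if_neg hi]
      rw [← hcoeff]
      exact ih f.eraseLead g (by have := f.eraseLead_natDegree_le; omega) hferase i j r

theorem semiprime_polynomial_annihilator_coeffwise
    {R : Type*} [Ring R]
    (hsp : ∀ a : R, (∀ r : R, a * r * a = 0) → a = 0)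
    (f g : Polynomial R) :
    (∀ h : Polynomial R, f * h * g = 0) ↔
      ∀ (i j : ℕ) (r : R), f.coeff i * r * g.coeff j = 0 := by
  constructor
  · intro H
    exact fwd hsp f.natDegree f g le_rfl H
  · intro H h
    ext k
    rw [coeff_zero, coeff_mul]
    apply Finset.sum_eq_zero
    intro p hp
    rw [coeff_mul, Finset.sum_mul]
    apply Finset.sum_eq_zero
    intro q hq
    exact H q.1 p.2 (h.coeff q.2)
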